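/- For every a > 1, every b ≥ 0, and every x ∈ ℝ, 1 − Φ(a·x + b) < min{2, a} · (1 − Φ(x)). -/

import Mathlib

open MeasureTheory

/-- The standard normal cumulative distribution function. -/
noncomputable def Phi (x : ℝ) : ℝ :=
  (ProbabilityTheory.gaussianReal 0 1 (Set.Iic x)).toReal

namespace TailRatioAux

open ProbabilityTheory Real

/-- standard normal pdf -/
noncomputable def npdf (t : ℝ) : ℝ := gaussianPDFReal 0 1 t

lemma npdf_eq (t : ℝ) : npdf t = (Real.sqrt (2 * Real.pi))⁻¹ * Real.exp (-(t ^ 2) / 2) := by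
  simp [npdf, gaussianPDFReal]

lemma npdf_pos (t : ℝ) : 0 < npdf t := gaussianPDFReal_pos 0 1 t one_ne_zero

lemma npdf_cont : Continuous npdf := by
  rw [funext npdf_eq]
  fun_prop

lemma npdf_anti {u v : ℝ} (h : u ^ 2 ≤ v ^ 2) : npdf v ≤ npdf u := by
  rw [npdf_eq, npdf_eq]
  have hexp : Real.exp (-(v ^ 2) / 2) ≤ Real.exp (-(u ^ 2) / 2) :=
    Real.exp_le_exp.mpr (by linarith)
  exact mul_le_mul_of_nonneg_left hexp (by positivity)

lemma npdf_integrable : Integrable npdf := integrable_gaussianPDFReal 0 1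

lemma Phi_eq_add (x y : ℝ) (h : x ≤ y) : Phi y = Phi x + ∫ t in x..y, npdf t := by
  have hdisj : Disjoint (Set.Iic x) (Set.Ioc x y) := by
    rw [Set.disjoint_left]
    rintro t ht ⟨h1, _⟩
    exact absurd ht (not_le.mpr h1)
  have hunion : Set.Iic x ∪ Set.Ioc x y = Set.Iic y := Set.Iic_union_Ioc_eq_Iic h
  have hmeas : gaussianReal 0 1 (Set.Iic y)
      = gaussianReal 0 1 (Set.Iic x) + gaussianReal 0 1 (Set.Ioc x y) := by
    rw [← hunion, measure_union hdisj measurableSet_Ioc]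
  have hIoc : (gaussianReal 0 1 (Set.Ioc x y)).toReal = ∫ t in x..y, npdf t := by
    rw [gaussianReal_apply_eq_integral 0 one_ne_zero, ENNReal.toReal_ofReal,
      intervalIntegral.integral_of_le h]
    · rfl
    · exact setIntegral_nonneg measurableSet_Ioc fun t _ => (npdf_pos t).le
  rw [Phi, Phi, hmeas, ENNReal.toReal_add (measure_ne_top _ _) (measure_ne_top _ _), hIoc]

lemma Phi_strictMono : StrictMono Phi := by
  intro x y hxy
  have := Phi_eq_add x y hxy.le
  have hpos : 0 < ∫ t in x..y, npdf t :=
    intervalIntegral.intervalIntegral_pos_of_pos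
      (npdf_integrable.intervalIntegrable) npdf_pos hxy
  linarith

lemma Phi_mono : Monotone Phi := Phi_strictMono.monotone

lemma Phi_nonneg (x : ℝ) : 0 ≤ Phi x := ENNReal.toReal_nonneg

lemma Phi_le_one (x : ℝ) : Phi x ≤ 1 := by
  have h : ProbabilityTheory.gaussianReal 0 1 (Set.Iic x) ≤ 1 := prob_le_one
  have := ENNReal.toReal_mono ENNReal.one_ne_top h
  simpa [Phi] using this

lemma Phi_pos (x : ℝ) : 0 < Phi x := lt_of_le_of_lt (Phi_nonneg (x - 1)) (Phi_strictMono (by linarith))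

lemma Phi_lt_one (x : ℝ) : Phi x < 1 := lt_of_lt_of_le (Phi_strictMono (lt_add_one x)) (Phi_le_one (x + 1))

lemma Phi_add_Phi_neg (x : ℝ) : Phi x + Phi (-x) = 1 := by
  have hmap : (gaussianReal 0 1).map ((-1 : ℝ) * ·) = gaussianReal 0 1 := by
    rw [gaussianReal_map_const_mul (-1 : ℝ)]
    norm_num
  have hIci : gaussianReal 0 1 (Set.Iic (-x)) = gaussianReal 0 1 (Set.Ici x) := by
    conv_lhs => rw [← hmap]
    rw [Measure.map_apply (by fun_prop : Measurable fun t : ℝ => (-1 : ℝ) * t) measurableSet_Iic]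
    congr 1
    ext t
    simp
  have hx0 : gaussianReal 0 1 {x} = 0 :=
    gaussianReal_absolutelyContinuous 0 one_ne_zero (volume_singleton)
  have hsum : gaussianReal 0 1 (Set.Iic x) + gaussianReal 0 1 (Set.Ici x) = 1 + 0 := by
    rw [← hx0]
    rw [← measure_univ (μ := gaussianReal 0 1)]
    rw [← measure_union_add_inter (Set.Iic x) measurableSet_Ici]
    congr 1
    · congr 1; ext t; simp [le_total]
    · congr 1; ext t; simp [le_antisymm_iff, and_comm]
  rw [Phi, Phi, hIci]
  rw [← ENNReal.toReal_add (measure_ne_top _ _) (measure_ne_top _ _), hsum]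
  simp

lemma Phi_zero : Phi 0 = 1 / 2 := by
  have := Phi_add_Phi_neg 0
  norm_num at this
  linarith

lemma half_le_one_sub_Phi {x : ℝ} (hx : x ≤ 0) : 1 / 2 ≤ 1 - Phi x := by
  have h1 := Phi_add_Phi_neg x
  have h2 : Phi 0 ≤ Phi (-x) := Phi_mono (by linarith)
  rw [Phi_zero] at h2
  linarith

lemma hasDerivAt_Phi (x : ℝ) : HasDerivAt Phi (npdf x) x := by
  have h : HasDerivAt (fun u => Phi x + ∫ t in x..u, npdf t) (npdf x) x := by
    refine HasDerivAt.const_add _ ?_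
    exact intervalIntegral.integral_hasDerivAt_right
      (npdf_integrable.intervalIntegrable)
      (npdf_cont.stronglyMeasurableAtFilter _ _)
      npdf_cont.continuousAt
  have heq : Phi = fun u => Phi x + ∫ t in x..u, npdf t := by
    funext u
    rcases le_total x u with h' | h'
    · exact Phi_eq_add x u h'
    · have := Phi_eq_add u x h'
      rw [intervalIntegral.integral_symm]
      linarith
  rw [heq]
  exact h

lemma abs_mul_npdf_le (u : ℝ) : |u| * npdf u ≤ (Real.sqrt (2 * Real.pi))⁻¹ * Real.exp (-(1:ℝ) / 2) := by
  rw [npdf_eq]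
  have h1 : |u| ≤ Real.exp ((u ^ 2 - 1) / 2) := by
    have := Real.add_one_le_exp ((u ^ 2 - 1) / 2)
    nlinarith [sq_nonneg (|u| - 1), sq_abs u]
  have h2 : |u| * Real.exp (-(u ^ 2) / 2) ≤ Real.exp (-(1:ℝ) / 2) := by
    calc |u| * Real.exp (-(u ^ 2) / 2)
        ≤ Real.exp ((u ^ 2 - 1) / 2) * Real.exp (-(u ^ 2) / 2) := by
          exact mul_le_mul_of_nonneg_right h1 (Real.exp_nonneg _)
      _ = Real.exp (-(1:ℝ) / 2) := by rw [← Real.exp_add]; ring_nf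
  calc |u| * ((Real.sqrt (2 * Real.pi))⁻¹ * Real.exp (-(u ^ 2) / 2))
      = (Real.sqrt (2 * Real.pi))⁻¹ * (|u| * Real.exp (-(u ^ 2) / 2)) := by ring
    _ ≤ (Real.sqrt (2 * Real.pi))⁻¹ * Real.exp (-(1:ℝ) / 2) := by
        exact mul_le_mul_of_nonneg_left h2 (by positivity)

lemma key_const_lt_half : (Real.sqrt (2 * Real.pi))⁻¹ * Real.exp (-(1:ℝ) / 2) < 1 / 2 := by
  have hs : (0:ℝ) < Real.sqrt (2 * Real.pi) := Real.sqrt_pos.mpr (by positivity)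
  have hpi : (2:ℝ) < Real.sqrt (2 * Real.pi) := by
    nlinarith [Real.sq_sqrt (le_of_lt (by positivity : (0:ℝ) < 2 * Real.pi)),
      Real.pi_gt_three, hs]
  have hinv : (Real.sqrt (2 * Real.pi))⁻¹ * Real.sqrt (2 * Real.pi) = 1 :=
    inv_mul_cancel₀ (ne_of_gt hs)
  have h2 : Real.exp (-(1:ℝ) / 2) ≤ 1 := by
    rw [Real.exp_le_one_iff]; norm_num
  nlinarith [Real.exp_pos (-(1:ℝ) / 2), inv_pos.mpr hs]

lemma key_lemma {x a : ℝ} (hx : x < 0) (ha : 1 < a) :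
    1 - Phi (a * x) < a * (1 - Phi x) := by
  set c := 1 - Phi x with hc
  have hg : ∀ t : ℝ, HasDerivAt (fun t => t * c + Phi (t * x)) (c + npdf (t * x) * x) t := by
    intro t
    have h1 : HasDerivAt (fun t : ℝ => t * c) c t := hasDerivAt_mul_const c
    have h2 : HasDerivAt (fun t : ℝ => Phi (t * x)) (npdf (t * x) * x) t :=
      by have := (hasDerivAt_Phi (t * x)).comp t (hasDerivAt_mul_const x); exact this
    exact h1.add h2
  have hderiv_pos : ∀ t : ℝ, 1 ≤ t → 0 < c + npdf (t * x) * x := by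
    intro t ht
    have hsq : x ^ 2 ≤ (t * x) ^ 2 := by
      have ht2 : (1:ℝ) ≤ t ^ 2 := by nlinarith [sq_nonneg (t - 1)]
      nlinarith [sq_nonneg x]
    have h1 : npdf (t * x) ≤ npdf x := npdf_anti hsq
    have h2 : npdf (t * x) * (-x) ≤ npdf x * (-x) :=
      mul_le_mul_of_nonneg_right h1 (by linarith)
    have h3 : npdf x * (-x) ≤ (Real.sqrt (2 * Real.pi))⁻¹ * Real.exp (-(1:ℝ) / 2) := by
      have := abs_mul_npdf_le x
      rw [abs_of_neg hx] at this
      linarith [this]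
    have h4 := key_const_lt_half
    have h5 := half_le_one_sub_Phi hx.le
    have : npdf (t * x) * x = -(npdf (t * x) * (-x)) := by ring
    rw [this]
    linarith
  have hmono : StrictMonoOn (fun t => t * c + Phi (t * x)) (Set.Icc 1 a) := by
    apply strictMonoOn_of_deriv_pos (convex_Icc 1 a)
    · exact fun t _ => ((hg t).continuousAt).continuousWithinAt
    · intro t ht
      rw [interior_Icc] at ht
      rw [(hg t).deriv]
      exact hderiv_pos t ht.1.le
  have h1a : (1 : ℝ) ∈ Set.Icc (1:ℝ) a := Set.mem_Icc.mpr ⟨le_refl 1, ha.le⟩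
  have haa : a ∈ Set.Icc (1:ℝ) a := Set.mem_Icc.mpr ⟨ha.le, le_refl a⟩
  have := hmono h1a haa ha
  simp only [one_mul] at this
  have hP : c + Phi x = 1 := by rw [hc]; ring
  nlinarith [this]

end TailRatioAux

/-- Case (1) of the paper's Lemma on the tail ratio: for `a > 1`, `b ≥ 0` and all `x`,
`1 − Φ(a·x + b) < min{2, a}·(1 − Φ(x))`. -/
theorem tail_ratio_bound_b_nonneg (a b x : ℝ) (ha : 1 < a) (hb : 0 ≤ b) :
    1 - Phi (a * x + b) < min 2 a * (1 - Phi x) := by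
  have hmin1 : 1 < min 2 a := lt_min one_lt_two ha
  have h0 : 0 < 1 - Phi x := by have := TailRatioAux.Phi_lt_one x; linarith
  rcases le_or_gt 0 x with hx | hx
  · have hxx : x ≤ a * x + b := by nlinarith
    have h1 : Phi x ≤ Phi (a * x + b) := TailRatioAux.Phi_mono hxx
    nlinarith
  · rcases min_cases 2 a with ⟨hm, _⟩ | ⟨hm, _⟩ <;> rw [hm]
    · have h1 : 0 < Phi (a * x + b) := TailRatioAux.Phi_pos _
      have h2 := TailRatioAux.half_le_one_sub_Phi hx.le
      linarith
    · have h1 : Phi (a * x) ≤ Phi (a * x + b) := TailRatioAux.Phi_mono (by linarith)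
      have h2 := TailRatioAux.key_lemma hx ha
      linarith
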